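/- arXiv:math/0608606 — 2 statements merged into one kernel-verified Lean document; each statement's English description precedes it below -/
import Mathlib

section
/- For every n > 1, the polynomial P_n(u) = ∑_{m=1}^n (m-1)! * S(n,m) * u^m satisfies P_n(-1) = 0, i.e., ∑_{m=1}^n (-1)^m * (m-1)! * S(n,m) = 0. -/
open Nat

/-- Stirling numbers of the second kind: number of partitions of an `n`-set into `m`
non-empty blocks, given by the standard recurrence. -/
def stirling : ℕ → ℕ → ℕ
  | 0, 0 => 1
  | 0, _ + 1 => 0
  | _ + 1, 0 => 0
  | n + 1, m + 1 => (m + 1) * stirling n (m + 1) + stirling n m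

lemma stirling_eq_zero_of_lt : ∀ n m : ℕ, n < m → stirling n m = 0 := by
  intro n
  induction n with
  | zero => intro m hm; cases m with
    | zero => omega
    | succ m => rfl
  | succ n ih =>
    intro m hm
    cases m with
    | zero => omega
    | succ m =>
      show (m + 1) * stirling n (m + 1) + stirling n m = 0
      rw [ih (m + 1) (by omega), ih m (by omega)]
      ring

/-- for n ≥ 2, P_n(-1) = 0, i.e. ∑_{m=1}^n (-1)^m (m-1)! S(n,m) = 0. -/
theorem stmt_2 (n : ℕ) (hn : 2 ≤ n) :
    ∑ m ∈ Finset.Icc 1 n, (-1 : ℤ) ^ m * (m - 1)! * stirling n m = 0 := by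
  obtain ⟨k, rfl⟩ : ∃ k, n = k + 2 := ⟨n - 2, by omega⟩
  set g : ℕ → ℤ := fun j => (-1 : ℤ) ^ j * (j ! : ℤ) * stirling (k + 1) j with hg
  rw [← Finset.Ico_add_one_right_eq_Icc, Finset.sum_Ico_eq_sum_range]
  have hcongr : ∀ j ∈ Finset.range (k + 3 - 1),
      (-1 : ℤ) ^ (1 + j) * ((1 + j - 1)! : ℤ) * stirling (k + 2) (1 + j)
        = g (j + 1) - g j := by
    intro j _
    have h1 : 1 + j = j + 1 := by omega
    have h2 : (j + 1 - 1) = j := by omega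
    rw [h1, h2]
    have hrec : stirling (k + 2) (j + 1)
        = (j + 1) * stirling (k + 1) (j + 1) + stirling (k + 1) j := rfl
    rw [hrec, hg]
    simp only [Nat.factorial_succ]
    push_cast
    ring
  rw [Finset.sum_congr (s₁ := Finset.range (k + 2 + 1 - 1)) (s₂ := Finset.range (k + 2 + 1 - 1)) rfl hcongr, Finset.sum_range_sub]
  have h0 : stirling (k + 1) 0 = 0 := rfl
  rw [hg]
  simp [h0, stirling_eq_zero_of_lt (k + 1) (k + 2) (by omega)]
end

section
/- For integers m, n ≥ 1, the residue at x = 0 of x^(m-1)/(log(1+x))^n dx, i.e., the coefficient of x^(-1) in the formal Laurent series x^(m-1)/(log(1+x))^n, equals (m-1)! * S(n,m) / (n-1)!, where S(n,m) is the Stirling number of the second kind. -/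
open Nat

/-- The formal power series log(1+x) = ∑_{k≥1} (-1)^(k-1) x^k / k over ℚ. -/
noncomputable def logOnePlus : PowerSeries ℚ :=
  PowerSeries.mk fun k => if k = 0 then 0 else (-1 : ℚ) ^ (k - 1) / k

/-- log(1+x) viewed as a formal Laurent series in ℚ⸨x⸩. -/
noncomputable def logL : LaurentSeries ℚ := (logOnePlus : LaurentSeries ℚ)

/-- x as a Laurent series. -/
noncomputable def xL : LaurentSeries ℚ := ((PowerSeries.X : PowerSeries ℚ) : LaurentSeries ℚ)



open PowerSeries

noncomputable def uPS : PowerSeries ℚ := PowerSeries.mk fun k => (-1:ℚ)^k / ((k:ℚ)+1)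
noncomputable def vPS : PowerSeries ℚ := uPS⁻¹

lemma uPS_const : PowerSeries.constantCoeff uPS = 1 := by simp [uPS]

lemma log_eq : logOnePlus = PowerSeries.X * uPS := by
  ext k
  cases k with
  | zero => simp [logOnePlus]
  | succ j =>
    rw [coeff_succ_X_mul]
    simp [logOnePlus, uPS]

lemma uv : uPS * vPS = 1 :=
  PowerSeries.mul_inv_cancel _ (by rw [uPS_const]; norm_num)

lemma vPS_const : PowerSeries.constantCoeff vPS = 1 := by
  rw [vPS, constantCoeff_inv, uPS_const]; norm_num

-- derivative of uv = 1
lemma du_dv : (d⁄dX ℚ) uPS * vPS + uPS * (d⁄dX ℚ) vPS = 0 := by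
  have h := congrArg (d⁄dX ℚ) uv
  rw [Derivation.leibniz, Derivation.map_one_eq_zero] at h
  simp only [smul_eq_mul] at h
  linear_combination h

-- key A
lemma keyA : (1 + PowerSeries.X) * (uPS + PowerSeries.X * (d⁄dX ℚ) uPS) = 1 := by
  have hmid : uPS + PowerSeries.X * (d⁄dX ℚ) uPS = PowerSeries.mk fun k => (-1:ℚ)^k := by
    ext k
    cases k with
    | zero => simp [uPS]
    | succ j =>
      rw [map_add, coeff_succ_X_mul, coeff_derivative]
      simp [uPS]
      push_cast
      field_simp
      ring
  rw [hmid]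
  ext k
  cases k with
  | zero => simp
  | succ j =>
    rw [add_mul, one_mul, map_add, coeff_succ_X_mul]
    simp [pow_succ]

-- key B
lemma keyB : (1 + PowerSeries.X) * (vPS - PowerSeries.X * (d⁄dX ℚ) vPS) = vPS^2 := by
  have h1 := uv
  have h2 := du_dv
  have hA := keyA
  have step : (uPS + PowerSeries.X * (d⁄dX ℚ) uPS) * vPS^2
      = vPS - PowerSeries.X * (d⁄dX ℚ) vPS := by
    linear_combination (vPS - PowerSeries.X * (d⁄dX ℚ) vPS + PowerSeries.X * (d⁄dX ℚ) vPS * uPS * vPS) * h1 + PowerSeries.X * vPS * h2 - uPS * PowerSeries.X * vPS * (d⁄dX ℚ) vPS * h1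
  calc (1 + PowerSeries.X) * (vPS - PowerSeries.X * (d⁄dX ℚ) vPS)
      = ((1 + PowerSeries.X) * (uPS + PowerSeries.X * (d⁄dX ℚ) uPS)) * vPS^2 := by
        rw [mul_assoc, step]
    _ = vPS^2 := by rw [hA, one_mul]

lemma dpow (n : ℕ) : (d⁄dX ℚ) (vPS^(n+1)) = (n+1 : ℚ⟦X⟧) * (vPS^n * (d⁄dX ℚ) vPS) := by
  induction n with
  | zero => simp
  | succ j ih =>
    rw [pow_succ, Derivation.leibniz, ih]
    push_cast
    simp only [smul_eq_mul]
    ring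

lemma keyC (n : ℕ) :
    (1 + PowerSeries.X) * ((n+1 : ℚ⟦X⟧) * vPS^(n+1) - PowerSeries.X * (d⁄dX ℚ) (vPS^(n+1)))
      = (n+1 : ℚ⟦X⟧) * vPS^(n+2) := by
  rw [dpow]
  have hB := keyB
  have : vPS^(n+2) = vPS^n * vPS^2 := by ring
  rw [this]
  linear_combination (n+1 : ℚ⟦X⟧) * vPS^n * hB

-- coefficient of g := (n+1)*w - X * dw
lemma coeff_g (w : ℚ⟦X⟧) (n k : ℕ) :
    PowerSeries.coeff k ((n+1 : ℚ⟦X⟧) * w - PowerSeries.X * (d⁄dX ℚ) w)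
      = ((n:ℚ) + 1 - k) * PowerSeries.coeff k w := by
  rw [map_sub]
  have hcast : ((n:ℚ⟦X⟧) + 1) = PowerSeries.C ((n:ℚ)+1) := by rw [map_add, map_natCast, map_one]
  rw [hcast, coeff_C_mul]
  cases k with
  | zero => simp
  | succ j =>
    rw [coeff_succ_X_mul, coeff_derivative]
    push_cast
    ring

lemma recurrence (n k : ℕ) :
    ((n:ℚ)+1) * PowerSeries.coeff (k+1) (vPS^(n+2))
      = ((n:ℚ) + 1 - (k+1)) * PowerSeries.coeff (k+1) (vPS^(n+1))
        + ((n:ℚ) + 1 - k) * PowerSeries.coeff k (vPS^(n+1)) := by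
  have h := congrArg (PowerSeries.coeff (k+1)) (keyC n)
  rw [add_mul, one_mul, map_add, coeff_succ_X_mul, coeff_g, coeff_g] at h
  have hcast : ((n:ℚ⟦X⟧) + 1) = PowerSeries.C ((n:ℚ)+1) := by rw [map_add, map_natCast, map_one]
  rw [hcast, coeff_C_mul] at h
  push_cast at h ⊢
  linear_combination -h

lemma coeff_zero_pow (n : ℕ) : PowerSeries.coeff 0 (vPS^n) = 1 := by
  rw [coeff_zero_eq_constantCoeff, map_pow, vPS_const, one_pow]

lemma stirling_eq_zero : ∀ n m, n < m → stirling n m = 0 := by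
  intro n
  induction n with
  | zero => intro m hm; match m, hm with | (j+1), _ => rfl
  | succ n ih =>
    intro m hm
    match m, hm with
    | (j+1), hm =>
      show (j + 1) * stirling n (j + 1) + stirling n j = 0
      rw [ih (j+1) (by omega), ih j (by omega)]
      ring

lemma stirling_self : ∀ n, stirling n n = 1
  | 0 => rfl
  | n + 1 => by
    show (n + 1) * stirling n (n + 1) + stirling n n = 1
    rw [stirling_self n, stirling_eq_zero n (n+1) (by omega)]
    ring

lemma main : ∀ n, ∀ k, k < n → PowerSeries.coeff k (vPS ^ n)
    = ((n - 1 - k)! * stirling n (n - k) : ℚ) / (n - 1)! := by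
  intro n
  induction n with
  | zero => intro k hk; omega
  | succ n ih =>
    intro k hk
    match k, hk with
    | 0, _ =>
      rw [coeff_zero_pow]
      have e1 : n + 1 - 1 - 0 = n := by omega
      have e2 : n + 1 - 0 = n + 1 := by omega
      rw [e1, e2, stirling_self, Nat.succ_sub_one]
      rw [Nat.cast_one, mul_one, div_self]
      exact_mod_cast Nat.factorial_ne_zero n
    | (j+1), hk =>
      obtain ⟨m, rfl⟩ : ∃ m, n = j + m + 1 := ⟨n - j - 1, by omega⟩
      have hrec := recurrence (j + m) j
      have hc0 := ih j (by omega)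
      have e0a : j + m + 1 - 1 - j = m := by omega
      have e0b : j + m + 1 - j = m + 1 := by omega
      rw [e0a, e0b] at hc0
      have egoal1 : j + m + 1 + 1 - 1 - (j+1) = m := by omega
      have egoal2 : j + m + 1 + 1 - (j+1) = m + 1 := by omega
      rw [egoal1, egoal2, Nat.succ_sub_one]
      have epow : j + m + 1 + 1 = j + m + 2 := rfl
      rw [epow]
      have eden : j + m + 1 - 1 = j + m := by omega
      rw [eden] at hc0
      cases m with
      | zero =>
        have hs : stirling (j + 0 + 2) (0+1) = stirling (j + 0 + 1) 1 := by
          show (0 + 1) * stirling (j + 0 + 1) (0 + 1) + stirling (j + 0 + 1) 0 = _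
          show (0 + 1) * stirling (j + 0 + 1) (0 + 1) + 0 = _
          ring
        rw [hs]
        have hfac : ((j + 0 + 1)! : ℚ) = ((j:ℚ) + 0 + 1) * ((j + 0)! : ℚ) := by
          rw [Nat.factorial_succ]; push_cast; ring
        have hne : (((j+0)! : ℚ)) ≠ 0 := by exact_mod_cast Nat.factorial_ne_zero _
        have hne2 : ((j:ℚ) + 0 + 1) ≠ 0 := by positivity
        rw [hfac]
        rw [hc0] at hrec
        push_cast at hrec ⊢
        field_simp at hrec ⊢
        linear_combination hrec
      | succ i =>
        set m := i + 1 with hm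
        have hc1 := ih (j+1) (by omega)
        have e1a : j + m + 1 - 1 - (j+1) = i := by omega
        have e1b : j + m + 1 - (j+1) = m := by omega
        rw [e1a, e1b, eden] at hc1
        have hs : stirling (j + m + 2) (m+1)
            = (m + 1) * stirling (j + m + 1) (m + 1) + stirling (j + m + 1) m := rfl
        rw [hs]
        rw [hc0, hc1] at hrec
        have hfac : ((j + m + 1)! : ℚ) = ((j:ℚ) + m + 1) * ((j + m)! : ℚ) := by
          rw [Nat.factorial_succ]; push_cast; ring
        have hfacm : ((m)! : ℚ) = ((m:ℚ)) * ((i)! : ℚ) := by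
          rw [hm, Nat.factorial_succ]; push_cast; ring
        have hne : (((j+m)! : ℚ)) ≠ 0 := by exact_mod_cast Nat.factorial_ne_zero _
        have hne2 : ((j:ℚ) + m + 1) ≠ 0 := by positivity
        rw [hfac, hfacm]
        rw [hfacm] at hrec
        push_cast at hrec ⊢
        field_simp at hrec ⊢
        linear_combination hrec

lemma logL_pow_inv (n : ℕ) :
    (logL ^ n)⁻¹ = HahnSeries.single (-(n:ℤ)) 1 * ((vPS ^ n : ℚ⟦X⟧) : LaurentSeries ℚ) := by
  apply inv_eq_of_mul_eq_one_right
  have h1 : logL ^ n = ((PowerSeries.X ^ n * uPS ^ n : ℚ⟦X⟧) : LaurentSeries ℚ) := by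
    rw [logL, log_eq, ← PowerSeries.coe_pow, mul_pow]
  rw [h1, PowerSeries.coe_mul]
  have h2 : ((PowerSeries.X ^ n : ℚ⟦X⟧) : LaurentSeries ℚ) = HahnSeries.single (n : ℤ) 1 :=
    HahnSeries.ofPowerSeries_X_pow n
  rw [h2]
  calc HahnSeries.single (n:ℤ) 1 * ((uPS^n : ℚ⟦X⟧) : LaurentSeries ℚ) *
        (HahnSeries.single (-(n:ℤ)) 1 * ((vPS^n : ℚ⟦X⟧) : LaurentSeries ℚ))
      = (HahnSeries.single (n:ℤ) 1 * HahnSeries.single (-(n:ℤ)) 1) *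
        (((uPS^n * vPS^n : ℚ⟦X⟧)) : LaurentSeries ℚ) := by
        rw [PowerSeries.coe_mul]; ring
    _ = 1 := by
        rw [HahnSeries.single_mul_single, add_neg_cancel, mul_one, ← mul_pow, uv, one_pow,
          PowerSeries.coe_one, HahnSeries.single_zero_one, one_mul]

/-- for m, n ≥ 1 the residue at x = 0 of x^(m-1)/(log(1+x))^n, i.e. the
coefficient of x^(-1), equals (m-1)! S(n,m)/(n-1)!. -/
theorem stmt_8 (m n : ℕ) (hm : 1 ≤ m) (hn : 1 ≤ n) :
    (xL ^ (m - 1) * (logL ^ n)⁻¹).coeff (-1) =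
      ((m - 1)! * stirling n m : ℚ) / (n - 1)! := by
  rw [logL_pow_inv]
  have hx : xL ^ (m-1) = HahnSeries.single ((m-1 : ℕ) : ℤ) 1 := by
    rw [xL, ← PowerSeries.coe_pow]
    exact HahnSeries.ofPowerSeries_X_pow (m-1)
  rw [hx, ← mul_assoc, HahnSeries.single_mul_single, one_mul]
  have hkey : (-1 : ℤ) = ((n:ℤ) - m) + (((m-1:ℕ):ℤ) + -(n:ℤ)) := by
    have h : ((m-1:ℕ):ℤ) = (m:ℤ) - 1 := by omega
    rw [h]; ring
  rw [hkey, HahnSeries.coeff_single_mul_add, one_mul]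
  rw [PowerSeries.coeff_coe]
  by_cases hmn : m ≤ n
  · rw [if_neg (by omega)]
    have hnat : ((n:ℤ) - m).natAbs = n - m := by omega
    rw [hnat, main n (n-m) (by omega)]
    have e1 : n - 1 - (n - m) = m - 1 := by omega
    have e2 : n - (n - m) = m := by omega
    rw [e1, e2]
  · rw [if_pos (by omega), stirling_eq_zero n m (by omega)]
    simp
end
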